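/- Let k, l ≥ 1 be integers, n = 2^k and m = 2^l. If v ∈ (ZMod m)^n satisfies D^β(v) = v for some integer β ≥ 1, then v = (0, 0, …, 0); that is, K(ℤ_{2^l}^{2^k}) is the trivial subgroup. -/

import Mathlib

/-- The Ducci map on `(ZMod m)^n` with cyclic indexing:
`D(x_1,…,x_n) = (x_1+x_2, x_2+x_3, …, x_n+x_1)`. -/
def ducci (n m : ℕ) (x : Fin n → ZMod m) : Fin n → ZMod m :=
  fun i => x i + x ⟨(i.val + 1) % n, Nat.mod_lt _ i.pos⟩

open Polynomial in
lemma one_add_X_pow_two_pow (R : Type*) [CommRing R] (j : ℕ) :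
    ∃ t : R[X], (1 + X) ^ (2 ^ j) = 1 + X ^ (2 ^ j) + 2 * t := by
  induction j with
  | zero => exact ⟨0, by ring⟩
  | succ j ih =>
    obtain ⟨t, ht⟩ := ih
    refine ⟨X ^ (2 ^ j) + 2 * t + 2 * t * X ^ (2 ^ j) + 2 * t ^ 2, ?_⟩
    have h2 : (2:ℕ) ^ (j+1) = 2 ^ j * 2 := by ring
    rw [h2, pow_mul, ht]
    ring

open Fin.NatCast in
/-- For `n = 2^k`, `m = 2^l`, the only tuple in a Ducci cycle is `(0,…,0)`:
`K(ℤ_{2^l}^{2^k})` is trivial. -/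
theorem ducci_cycle_trivial (k l : ℕ) (hk : 1 ≤ k) (hl : 1 ≤ l)
    (v : Fin (2 ^ k) → ZMod (2 ^ l))
    (h : ∃ β : ℕ, 1 ≤ β ∧ (ducci (2 ^ k) (2 ^ l))^[β] v = v) :
    v = 0 := by
  obtain ⟨β, hβ, hv⟩ := h
  haveI : NeZero (2 ^ k) := ⟨by positivity⟩
  -- the shift endomorphism
  let s : Module.End (ZMod (2 ^ l)) (Fin (2 ^ k) → ZMod (2 ^ l)) :=
    { toFun := fun x i => x (i + 1)
      map_add' := fun a b => rfl
      map_smul' := fun c a => rfl }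
  let d : Module.End (ZMod (2 ^ l)) (Fin (2 ^ k) → ZMod (2 ^ l)) := 1 + s
  -- ducci agrees with d
  have hducci : ∀ x, ducci (2 ^ k) (2 ^ l) x = d x := by
    intro x
    funext i
    have hidx : (⟨(i.val + 1) % 2 ^ k, Nat.mod_lt _ i.pos⟩ : Fin (2 ^ k)) = i + 1 := by
      apply Fin.ext
      simp [Fin.add_def, Fin.val_one']
    show x i + x _ = x i + x (i + 1)
    rw [hidx]
  -- iterates
  have hiter : ∀ (α : ℕ) (x), (ducci (2 ^ k) (2 ^ l))^[α] x = (d ^ α) x := by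
    intro α
    induction α with
    | zero => intro x; simp
    | succ α ih =>
      intro x
      rw [Function.iterate_succ_apply', ih, hducci, pow_succ', Module.End.mul_apply]
  -- shift powers
  have hs : ∀ (r : ℕ) (x) (i : Fin (2 ^ k)), (s ^ r) x i = x (i + (r : Fin (2 ^ k))) := by
    intro r
    induction r with
    | zero => intro x i; simp
    | succ r ih =>
      intro x i
      rw [pow_succ, Module.End.mul_apply]
      show (s ^ r) (s x) i = _
      rw [ih]
      show x (i + (r : Fin (2 ^ k)) + 1) = _
      rw [Nat.cast_add, Nat.cast_one, add_assoc]
  have hsn : s ^ (2 ^ k) = 1 := by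
    apply LinearMap.ext
    intro x
    funext i
    rw [hs]
    simp
  -- key: d ^ (2 ^ k) = 2 * (1 + t(s))
  obtain ⟨t, ht⟩ := one_add_X_pow_two_pow (ZMod (2 ^ l)) k
  have hd : d = Polynomial.aeval s (1 + Polynomial.X : Polynomial (ZMod (2 ^ l))) := by
    simp [d]
  have hdn : d ^ (2 ^ k) = 2 * (1 + Polynomial.aeval s t) := by
    rw [hd, ← map_pow, ht]
    rw [map_add, map_add, map_mul, map_pow, map_one]
    simp only [Polynomial.aeval_X, map_ofNat]
    rw [hsn]
    noncomm_ring
  -- d ^ (2 ^ k * l) = 0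
  have h2l : ∀ x, ((2 : Module.End (ZMod (2 ^ l)) (Fin (2 ^ k) → ZMod (2 ^ l))) ^ l) x = 0 := by
    intro x
    have h1 : ((2 : Module.End (ZMod (2 ^ l)) (Fin (2 ^ k) → ZMod (2 ^ l))) ^ l)
        = ((2 ^ l : ℕ) : Module.End (ZMod (2 ^ l)) (Fin (2 ^ k) → ZMod (2 ^ l))) := by
      push_cast; ring
    rw [h1, Module.End.natCast_apply]
    have h0 : ((2 ^ l : ℕ) : ZMod (2 ^ l)) = 0 := ZMod.natCast_self _
    funext i
    simp [← Nat.cast_smul_eq_nsmul (ZMod (2 ^ l)), h0]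
  have hc : Commute (2 : Module.End (ZMod (2 ^ l)) (Fin (2 ^ k) → ZMod (2 ^ l)))
      (1 + Polynomial.aeval s t) := by
    simp [Commute, SemiconjBy, two_mul, mul_two]
  have hdnl : ∀ x, (d ^ (2 ^ k * l)) x = 0 := by
    intro x
    rw [pow_mul, hdn, hc.mul_pow, Module.End.mul_apply, h2l]
  -- v is fixed by d ^ (β * c) for every c
  have hfix : ∀ c : ℕ, (d ^ (β * c)) v = v := by
    intro c
    induction c with
    | zero => simp
    | succ c ih =>
      rw [Nat.mul_succ, pow_add, Module.End.mul_apply, ← hiter β v, hv, ih]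
  have h1 : β * (2 ^ k * l) = β * (2 ^ k * l) - 2 ^ k * l + 2 ^ k * l := by
    have h2 : 2 ^ k * l ≤ β * (2 ^ k * l) := Nat.le_mul_of_pos_left _ hβ
    omega
  have h3 := hfix (2 ^ k * l)
  rw [h1, pow_add, Module.End.mul_apply, hdnl, map_zero] at h3
  exact h3.symm
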